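/- Let G be an abelian group, ρ a height on G, and σ a metric height on G with σ(α) ≤ ρ(α) for all α ∈ G. Then σ(α) ≤ ρ₁(α) for all α ∈ G; that is, ρ₁ is the largest metric height bounded above by ρ. -/

import Mathlib

noncomputable section

variable {G : Type*} [CommGroup G]

/-- A *height* on an abelian group `G`: a function `ρ : G → [1, ∞)` with `ρ(1) = 1`
and `ρ(α) = ρ(α⁻¹)`. -/
def IsHeight (ρ : G → ℝ) : Prop :=
  ρ 1 = 1 ∧ (∀ α : G, 1 ≤ ρ α) ∧ ∀ α : G, ρ α⁻¹ = ρ α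

/-- A *metric height*: a height additionally satisfying `ρ(αβ) ≤ ρ(α)ρ(β)`. -/
def IsMetricHeight (ρ : G → ℝ) : Prop :=
  IsHeight ρ ∧ ∀ α β : G, ρ (α * β) ≤ ρ α * ρ β

/-- A *strong (non-Archimedean) metric height*: a height additionally satisfying
`ρ(αβ) ≤ max {ρ(α), ρ(β)}`. -/
def IsStrongMetricHeight (ρ : G → ℝ) : Prop :=
  IsHeight ρ ∧ ∀ α β : G, ρ (α * β) ≤ max (ρ α) (ρ β)

/-- The associated metric height
`ρ₁(α) = inf { ∏_n ρ(αₙ) : α = α₁α₂⋯ , αₙ = 1 for a.e. n }`. -/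
def metricH (ρ : G → ℝ) (α : G) : ℝ :=
  sInf {t : ℝ | ∃ a : ℕ → G, {n | a n ≠ 1}.Finite ∧ (∏ᶠ n, a n) = α ∧
    t = ∏ᶠ n, ρ (a n)}

/-- The associated strong metric height
`ρ_∞(α) = inf { max_n ρ(αₙ) : α = α₁α₂⋯ , αₙ = 1 for a.e. n }`. -/
def strongH (ρ : G → ℝ) (α : G) : ℝ :=
  sInf {t : ℝ | ∃ a : ℕ → G, {n | a n ≠ 1}.Finite ∧ (∏ᶠ n, a n) = α ∧
    t = ⨆ n, ρ (a n)}

/-- If `ρ` is a height on `G` and `σ` is a metric height with `σ ≤ ρ`, then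
`σ ≤ ρ₁`: `ρ₁` is the largest metric height bounded above by `ρ`. -/
theorem metricH_is_largest (ρ σ : G → ℝ) (hρ : IsHeight ρ) (hσ : IsMetricHeight σ)
    (hle : ∀ α : G, σ α ≤ ρ α) : ∀ α : G, σ α ≤ metricH ρ α := by
  intro α
  obtain ⟨⟨hσ1, hσge, hσinv⟩, hσmul⟩ := hσ
  obtain ⟨hρ1, hρge, _⟩ := hρ
  -- auxiliary: submultiplicativity over finite products
  have key : ∀ (s : Finset ℕ) (a : ℕ → G), σ (∏ i ∈ s, a i) ≤ ∏ i ∈ s, σ (a i) := by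
    intro s a
    induction s using Finset.induction with
    | empty => simp [hσ1]
    | insert _ _ hx ih =>
      rename_i x s
      rw [Finset.prod_insert hx, Finset.prod_insert hx]
      calc σ (a x * ∏ i ∈ s, a i) ≤ σ (a x) * σ (∏ i ∈ s, a i) := hσmul _ _
        _ ≤ σ (a x) * ∏ i ∈ s, σ (a i) := by
            have h0 : (0:ℝ) ≤ σ (a x) := le_trans zero_le_one (hσge _)
            exact mul_le_mul_of_nonneg_left ih h0
  apply le_csInf
  · refine ⟨ρ α, fun n => if n = 0 then α else 1, ?_, ?_, ?_⟩
    · refine Set.Finite.subset (Set.finite_singleton 0) ?_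
      intro n hn
      rcases eq_or_ne n 0 with h | h
      · simp [h]
      · exfalso; apply hn; simp [h]
    · rw [finprod_eq_single _ 0 (by intro n hn; simp [hn])]; simp
    · rw [finprod_eq_single _ 0 (by intro n hn; simp [hn, hρ1])]; simp
  · rintro t ⟨a, hfin, hprod, rfl⟩
    have hsup : (Function.mulSupport a) ⊆ hfin.toFinset := by
      intro n hn; simpa using hn
    have hsupρ : (Function.mulSupport fun n => ρ (a n)) ⊆ (hfin.toFinset : Set ℕ) := by
      intro n hn
      simp only [Function.mem_mulSupport] at hn
      simp only [Set.Finite.coe_toFinset, Set.mem_setOf_eq]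
      intro h; rw [h] at hn; exact hn hρ1
    rw [finprod_eq_prod_of_mulSupport_subset _ hsupρ]
    have hα : α = ∏ i ∈ hfin.toFinset, a i := by
      rw [← hprod, finprod_eq_prod_of_mulSupport_subset _ hsup]
    calc σ α = σ (∏ i ∈ hfin.toFinset, a i) := by rw [← hα]
      _ ≤ ∏ i ∈ hfin.toFinset, σ (a i) := key _ _
      _ ≤ ∏ i ∈ hfin.toFinset, ρ (a i) := by
          apply Finset.prod_le_prod
          · intro i _; exact le_trans zero_le_one (hσge _)
          · intro i _; exact hle _
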